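/- The pseudo-spherical Gauss map ν̃ = r ∧ e₁ ∧ e₂ of the pseudo-Riemannian Clifford torus r(u,v) = (1/√2)(0, cos u, sin u, cosh v, sinh v) in S^4_1(1) ⊂ E^5_1 satisfies Δν̃ = 2ν̃, where Δ is the Laplace operator of the induced flat Lorentzian metric (∂²/∂u² − ∂²/∂v² up to the conformal factor) acting componentwise on the Λ^3(E^5_1)-valued map. -/

import Mathlib

open scoped BigOperators


noncomputable def W (u v : ℝ) : Fin 5 → ℝ := ![0, Real.cos u, Real.sin u, Real.cosh v, Real.sinh v]
noncomputable def WU (u : ℝ) : Fin 5 → ℝ := ![0, -Real.sin u, Real.cos u, 0, 0]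
noncomputable def WUU (u : ℝ) : Fin 5 → ℝ := ![0, -Real.cos u, -Real.sin u, 0, 0]
noncomputable def WV (v : ℝ) : Fin 5 → ℝ := ![0, 0, 0, Real.sinh v, Real.cosh v]
noncomputable def WVV (v : ℝ) : Fin 5 → ℝ := ![0, 0, 0, Real.cosh v, Real.sinh v]

lemma hW_u (u v : ℝ) (i : Fin 5) : HasDerivAt (fun t => W t v i) (WU u i) u := by
  fin_cases i <;> simp [W, WU] <;>
    first
      | exact hasDerivAt_const _ _
      | exact Real.hasDerivAt_cos u
      | exact Real.hasDerivAt_sin u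

lemma hWU_u (u : ℝ) (i : Fin 5) : HasDerivAt (fun t => WU t i) (WUU u i) u := by
  fin_cases i <;> simp [WU, WUU] <;>
    first
      | exact hasDerivAt_const _ _
      | exact (Real.hasDerivAt_sin u).neg
      | exact Real.hasDerivAt_cos u

lemma hWUU_u (u : ℝ) (i : Fin 5) : HasDerivAt (fun t => WUU t i) (-(WU u i)) u := by
  fin_cases i <;> simp [WU, WUU] <;>
    first
      | exact hasDerivAt_const _ _
      | exact (Real.hasDerivAt_cos u).neg.congr_deriv (neg_neg _)
      | exact (Real.hasDerivAt_sin u).neg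

lemma hW_v (u v : ℝ) (i : Fin 5) : HasDerivAt (fun t => W u t i) (WV v i) v := by
  fin_cases i <;> simp [W, WV] <;>
    first
      | exact hasDerivAt_const _ _
      | exact Real.hasDerivAt_cosh v
      | exact Real.hasDerivAt_sinh v

lemma hWV_v (v : ℝ) (i : Fin 5) : HasDerivAt (fun t => WV t i) (WVV v i) v := by
  fin_cases i <;> simp [WV, WVV] <;>
    first
      | exact hasDerivAt_const _ _
      | exact Real.hasDerivAt_cosh v
      | exact Real.hasDerivAt_sinh v

lemma hWVV_v (v : ℝ) (i : Fin 5) : HasDerivAt (fun t => WVV t i) (WV v i) v := by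
  fin_cases i <;> simp [WV, WVV] <;>
    first
      | exact hasDerivAt_const _ _
      | exact Real.hasDerivAt_cosh v
      | exact Real.hasDerivAt_sinh v

lemma WUU_eq (u v : ℝ) (i : Fin 5) : WUU u i = WVV v i - W u v i := by
  fin_cases i <;> simp [W, WUU, WVV]

/-- The pseudo-Riemannian Clifford torus `r(u,v) = (1/√2)(0, cos u, sin u, cosh v, sinh v)`
in `S⁴₁(1) ⊂ E⁵₁`. -/
noncomputable def prCliff (u v : ℝ) : Fin 5 → ℝ :=
  (Real.sqrt 2)⁻¹ • ![0, Real.cos u, Real.sin u, Real.cosh v, Real.sinh v]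

noncomputable def prCliffU (u v : ℝ) : Fin 5 → ℝ := deriv (fun t => prCliff t v) u
noncomputable def prCliffV (u v : ℝ) : Fin 5 → ℝ := deriv (fun t => prCliff u t) v

/-- The (Plücker components of the) pseudo-spherical Gauss map `ν̃ = r ∧ e₁ ∧ e₂` of the
pseudo-Riemannian Clifford torus, with `e₁ = √2 r_u` (spacelike, `⟨e₁,e₁⟩ = 1`) and
`e₂ = √2 r_v` (timelike, `⟨e₂,e₂⟩ = −1`), so that `ν̃ = 2 r ∧ r_u ∧ r_v`. -/
noncomputable def prCliffGaussMap (u v : ℝ) (i j k : Fin 5) : ℝ :=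
  2 * Matrix.det (Matrix.of
      ![![prCliff u v i, prCliff u v j, prCliff u v k],
        ![prCliffU u v i, prCliffU u v j, prCliffU u v k],
        ![prCliffV u v i, prCliffV u v j, prCliffV u v k]])

/-- The pseudo-spherical Gauss map `ν̃ = r ∧ e₁ ∧ e₂` of the
pseudo-Riemannian Clifford torus in `S⁴₁(1) ⊂ E⁵₁` satisfies `Δν̃ = 2ν̃`, where
`Δ = ε₁(∇_{e₁}e₁ − e₁e₁) + ε₂(∇_{e₂}e₂ − e₂e₂) = −2∂²/∂u² + 2∂²/∂v²` is the Laplace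
operator of the induced flat Lorentzian metric `(1/2)(du² − dv²)`, acting componentwise. -/
noncomputable def detE (a b c : Fin 5 → ℝ) (i j k : Fin 5) : ℝ :=
  a i * (b j * c k - b k * c j) - a j * (b i * c k - b k * c i) + a k * (b i * c j - b j * c i)

lemma detE_hasDerivAt {a b c : ℝ → Fin 5 → ℝ} {a' b' c' : Fin 5 → ℝ} {t : ℝ}
    (i j k : Fin 5)
    (ha : ∀ m, HasDerivAt (fun s => a s m) (a' m) t)
    (hb : ∀ m, HasDerivAt (fun s => b s m) (b' m) t)
    (hc : ∀ m, HasDerivAt (fun s => c s m) (c' m) t) :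
    HasDerivAt (fun s => detE (a s) (b s) (c s) i j k)
      (detE a' (b t) (c t) i j k + detE (a t) b' (c t) i j k + detE (a t) (b t) c' i j k) t := by
  have H := (((ha i).mul (((hb j).mul (hc k)).sub ((hb k).mul (hc j)))).sub
      ((ha j).mul (((hb i).mul (hc k)).sub ((hb k).mul (hc i))))).add
      ((ha k).mul (((hb i).mul (hc j)).sub ((hb j).mul (hc i))))
  have heq : detE a' (b t) (c t) i j k + detE (a t) b' (c t) i j k + detE (a t) (b t) c' i j k =
      a' i * (b t j * c t k - b t k * c t j) +
          a t i * (b' j * c t k + b t j * c' k - (b' k * c t j + b t k * c' j)) -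
        (a' j * (b t i * c t k - b t k * c t i) +
          a t j * (b' i * c t k + b t i * c' k - (b' k * c t i + b t k * c' i))) +
        (a' k * (b t i * c t j - b t j * c t i) +
          a t k * (b' i * c t j + b t i * c' j - (b' j * c t i + b t j * c' i))) := by
    simp only [detE]; ring
  rw [heq]
  exact H

lemma prCliff_apply (u v : ℝ) (i : Fin 5) : prCliff u v i = (Real.sqrt 2)⁻¹ * W u v i := by
  simp [prCliff, W]

lemma prCliffU_apply (u v : ℝ) (i : Fin 5) : prCliffU u v i = (Real.sqrt 2)⁻¹ * WU u i := by
  have H : HasDerivAt (fun t => prCliff t v) ((Real.sqrt 2)⁻¹ • WU u) u := by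
    rw [hasDerivAt_pi]
    intro m
    have h := HasDerivAt.const_mul ((Real.sqrt 2)⁻¹) (hW_u u v m)
    simpa [prCliff, W] using h
  simp [prCliffU, H.deriv]

lemma prCliffV_apply (u v : ℝ) (i : Fin 5) : prCliffV u v i = (Real.sqrt 2)⁻¹ * WV v i := by
  have H : HasDerivAt (fun t => prCliff u t) ((Real.sqrt 2)⁻¹ • WV v) v := by
    rw [hasDerivAt_pi]
    intro m
    have h := HasDerivAt.const_mul ((Real.sqrt 2)⁻¹) (hW_v u v m)
    simpa [prCliff, W] using h
  simp [prCliffV, H.deriv]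

lemma key (u v : ℝ) (i j k : Fin 5) :
    prCliffGaussMap u v i j k = (Real.sqrt 2)⁻¹ * detE (W u v) (WU u) (WV v) i j k := by
  have hc : (Real.sqrt 2)⁻¹ * (Real.sqrt 2)⁻¹ = 2⁻¹ := by
    rw [← mul_inv, Real.mul_self_sqrt (by norm_num)]
  simp only [prCliffGaussMap, Matrix.det_fin_three, Matrix.of_apply, Matrix.cons_val',
    Matrix.cons_val_zero, Matrix.cons_val_one, Matrix.head_cons, Matrix.empty_val',
    Matrix.cons_val_fin_one, Matrix.head_fin_const, Matrix.cons_val_two, Matrix.tail_cons,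
    prCliff_apply, prCliffU_apply, prCliffV_apply, detE]
  linear_combination (2 * (Real.sqrt 2)⁻¹ *
    (W u v i * (WU u j * WV v k - WU u k * WV v j) - W u v j * (WU u i * WV v k - WU u k * WV v i)
      + W u v k * (WU u i * WV v j - WU u j * WV v i))) * hc


theorem prCliffordTorus_gaussMap_one_type :
    ∀ (u v : ℝ) (i j k : Fin 5),
      (-2 : ℝ) * deriv (fun t => deriv (fun t' => prCliffGaussMap t' v i j k) t) u
          + 2 * deriv (fun t => deriv (fun t' => prCliffGaussMap u t' i j k) t) v
        = 2 * prCliffGaussMap u v i j k := by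
  intro u v i j k
  -- first derivative in u
  have hFu : ∀ t : ℝ, HasDerivAt (fun s => prCliffGaussMap s v i j k)
      ((Real.sqrt 2)⁻¹ * (detE (WU t) (WU t) (WV v) i j k
        + detE (W t v) (WUU t) (WV v) i j k
        + detE (W t v) (WU t) (fun _ => 0) i j k)) t := by
    intro t
    have hfun : (fun s => prCliffGaussMap s v i j k)
        = fun s => (Real.sqrt 2)⁻¹ * detE (W s v) (WU s) (WV v) i j k :=
      funext fun s => key s v i j k
    rw [hfun]
    exact HasDerivAt.const_mul _ (detE_hasDerivAt i j k (fun m => hW_u t v m)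
      (fun m => hWU_u t m) (fun m => hasDerivAt_const t (WV v m)))
  have hdu1 : (fun t => deriv (fun t' => prCliffGaussMap t' v i j k) t)
      = fun t => (Real.sqrt 2)⁻¹ * (detE (WU t) (WU t) (WV v) i j k
        + detE (W t v) (WUU t) (WV v) i j k
        + detE (W t v) (WU t) (fun _ => 0) i j k) :=
    funext fun t => (hFu t).deriv
  -- second derivative in u
  have hFu2 : HasDerivAt (fun t => (Real.sqrt 2)⁻¹ * (detE (WU t) (WU t) (WV v) i j k
        + detE (W t v) (WUU t) (WV v) i j k
        + detE (W t v) (WU t) (fun _ => 0) i j k)) _ u :=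
    HasDerivAt.const_mul _
      (((detE_hasDerivAt i j k (fun m => hWU_u u m) (fun m => hWU_u u m)
          (fun m => hasDerivAt_const u (WV v m))).add
        (detE_hasDerivAt i j k (fun m => hW_u u v m) (fun m => hWUU_u u m)
          (fun m => hasDerivAt_const u (WV v m)))).add
        (detE_hasDerivAt i j k (fun m => hW_u u v m) (fun m => hWU_u u m)
          (fun m => hasDerivAt_const u ((0:ℝ)))))
  -- first derivative in v
  have hFv : ∀ t : ℝ, HasDerivAt (fun s => prCliffGaussMap u s i j k)
      ((Real.sqrt 2)⁻¹ * (detE (WV t) (WU u) (WV t) i j k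
        + detE (W u t) (fun _ => 0) (WV t) i j k
        + detE (W u t) (WU u) (WVV t) i j k)) t := by
    intro t
    have hfun : (fun s => prCliffGaussMap u s i j k)
        = fun s => (Real.sqrt 2)⁻¹ * detE (W u s) (WU u) (WV s) i j k :=
      funext fun s => key u s i j k
    rw [hfun]
    exact HasDerivAt.const_mul _ (detE_hasDerivAt i j k (fun m => hW_v u t m)
      (fun m => hasDerivAt_const t (WU u m)) (fun m => hWV_v t m))
  have hdv1 : (fun t => deriv (fun t' => prCliffGaussMap u t' i j k) t)
      = fun t => (Real.sqrt 2)⁻¹ * (detE (WV t) (WU u) (WV t) i j k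
        + detE (W u t) (fun _ => 0) (WV t) i j k
        + detE (W u t) (WU u) (WVV t) i j k) :=
    funext fun t => (hFv t).deriv
  -- second derivative in v
  have hFv2 : HasDerivAt (fun t => (Real.sqrt 2)⁻¹ * (detE (WV t) (WU u) (WV t) i j k
        + detE (W u t) (fun _ => 0) (WV t) i j k
        + detE (W u t) (WU u) (WVV t) i j k)) _ v :=
    HasDerivAt.const_mul _
      (((detE_hasDerivAt i j k (fun m => hWV_v v m)
          (fun m => hasDerivAt_const v (WU u m)) (fun m => hWV_v v m)).add
        (detE_hasDerivAt i j k (fun m => hW_v u v m)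
          (fun m => hasDerivAt_const v ((0:ℝ))) (fun m => hWV_v v m))).add
        (detE_hasDerivAt i j k (fun m => hW_v u v m)
          (fun m => hasDerivAt_const v (WU u m)) (fun m => hWVV_v v m)))
  rw [hdu1, hdv1, hFu2.deriv, hFv2.deriv, key u v i j k]
  simp only [detE]
  simp only [WUU_eq u v]
  ring
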